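/- arXiv:2204.13305 — 5 statements merged into one kernel-verified Lean document; each statement's English description precedes it below -/
import Mathlib

section
/- For every σ ∈ {prf, stb, sem, stg} and every i ∈ {1,2,4}, the semantics σ_p^i is not I-maximal for PCAFs, even when restricted to PCAFs with transitive preferences: there exists a PCAF F with transitive preference relation and sets of claims S,T ∈ σ_p^i(F) with S ⊊ T. -/
/-- A claim-augmented argumentation framework (CAF): a finite set of arguments,
an attack relation between the arguments, and a claim function assigning
a claim to each argument.  Arguments and claims are drawn from `ℕ`. -/
structure CAF where
  args : Finset ℕ
  att : Set (ℕ × ℕ)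
  claim : ℕ → ℕ
  att_dom : ∀ p ∈ att, p.1 ∈ args ∧ p.2 ∈ args

namespace CAF

/-- A CAF is well-formed if arguments with the same claim attack the same arguments. -/
def wf (F : CAF) : Prop :=
  ∀ a ∈ F.args, ∀ b ∈ F.args, F.claim a = F.claim b →
    ∀ c, ((a, c) ∈ F.att ↔ (b, c) ∈ F.att)

/-- `S` attacks the argument `b` in `F`. -/
def attacks (F : CAF) (S : Set ℕ) (b : ℕ) : Prop := ∃ a ∈ S, (a, b) ∈ F.att

/-- The argument `a` is defended by `S` in `F`. -/
def defends (F : CAF) (S : Set ℕ) (a : ℕ) : Prop :=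
  ∀ b, (b, a) ∈ F.att → F.attacks S b

/-- The range `S⊕` of `S` in `F`. -/
def range (F : CAF) (S : Set ℕ) : Set ℕ := S ∪ {b | F.attacks S b}

/-- Conflict-free sets. -/
def cf (F : CAF) (S : Set ℕ) : Prop :=
  S ⊆ ↑F.args ∧ ∀ a ∈ S, ∀ b ∈ S, (a, b) ∉ F.att

/-- Admissible sets. -/
def adm (F : CAF) (S : Set ℕ) : Prop :=
  F.cf S ∧ ∀ a ∈ S, F.defends S a

/-- Complete extensions. -/
def com (F : CAF) (S : Set ℕ) : Prop :=
  F.adm S ∧ ∀ a ∈ F.args, F.defends S a → a ∈ S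

/-- Naive extensions: ⊆-maximal conflict-free sets. -/
def naive (F : CAF) (S : Set ℕ) : Prop :=
  F.cf S ∧ ¬ ∃ T, F.cf T ∧ S ⊂ T

/-- Stable extensions. -/
def stb (F : CAF) (S : Set ℕ) : Prop :=
  F.cf S ∧ ∀ a ∈ F.args, a ∉ S → F.attacks S a

/-- Preferred extensions: ⊆-maximal admissible sets. -/
def prf (F : CAF) (S : Set ℕ) : Prop :=
  F.adm S ∧ ¬ ∃ T, F.adm T ∧ S ⊂ T

/-- Semi-stable extensions: admissible sets with ⊆-maximal range among admissible sets. -/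
def sem (F : CAF) (S : Set ℕ) : Prop :=
  F.adm S ∧ ¬ ∃ T, F.adm T ∧ F.range S ⊂ F.range T

/-- Stage extensions: conflict-free sets with ⊆-maximal range among conflict-free sets. -/
def stg (F : CAF) (S : Set ℕ) : Prop :=
  F.cf S ∧ ¬ ∃ T, F.cf T ∧ F.range S ⊂ F.range T

/-- The claim-based variant `σ_c` of a semantics `σ`. -/
def claimSem (σ : CAF → Set ℕ → Prop) (F : CAF) : Set (Set ℕ) :=
  {C | ∃ S, σ F S ∧ F.claim '' S = C}

/-- The wf-problematic part of a CAF: the pairs of arguments `(a,b)` such that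
`(a,b)` is not an attack but some argument `a'` with the same claim as `a` attacks `b`. -/
def wfp (F : CAF) : Set (ℕ × ℕ) :=
  {p | p.1 ∈ F.args ∧ p.2 ∈ F.args ∧ p ∉ F.att ∧
       ∃ a' ∈ F.args, F.claim a' = F.claim p.1 ∧ (a', p.2) ∈ F.att}

end CAF

/-- A preference-based CAF (PCAF): a well-formed CAF together with an
asymmetric preference relation over its arguments. -/
structure PCAF extends CAF where
  pref : ℕ → ℕ → Prop
  pref_dom : ∀ a b, pref a b → a ∈ args ∧ b ∈ args
  pref_asymm : ∀ a b, pref a b → ¬ pref b a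
  isWf : toCAF.wf

/-- The attack relation obtained from a PCAF by Reduction `i` (`i ∈ {1,2,3,4}`). -/
def redAtt (i : ℕ) (F : PCAF) : Set (ℕ × ℕ) :=
  if i = 1 then {p | p ∈ F.att ∧ ¬ F.pref p.2 p.1}
  else if i = 2 then
    {p | (p ∈ F.att ∧ ¬ F.pref p.2 p.1) ∨
         ((p.2, p.1) ∈ F.att ∧ p ∉ F.att ∧ F.pref p.1 p.2)}
  else if i = 3 then
    {p | (p ∈ F.att ∧ ¬ F.pref p.2 p.1) ∨ (p ∈ F.att ∧ (p.2, p.1) ∉ F.att)}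
  else if i = 4 then
    {p | (p ∈ F.att ∧ ¬ F.pref p.2 p.1) ∨
         ((p.2, p.1) ∈ F.att ∧ p ∉ F.att ∧ F.pref p.1 p.2) ∨
         (p ∈ F.att ∧ (p.2, p.1) ∉ F.att)}
  else ∅

/-- The CAF `Red_i(F)` obtained from the PCAF `F` by Reduction `i`. -/
def Red (i : ℕ) (F : PCAF) : CAF where
  args := F.args
  att := redAtt i F
  claim := F.claim
  att_dom := by
    intro p hp
    unfold redAtt at hp
    split_ifs at hp
    · simp only [Set.mem_setOf_eq] at hp
      exact F.att_dom p hp.1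
    · simp only [Set.mem_setOf_eq] at hp
      rcases hp with ⟨h, -⟩ | ⟨h, -, -⟩
      · exact F.att_dom p h
      · exact ⟨(F.att_dom _ h).2, (F.att_dom _ h).1⟩
    · simp only [Set.mem_setOf_eq] at hp
      rcases hp with ⟨h, -⟩ | ⟨h, -⟩ <;> exact F.att_dom p h
    · simp only [Set.mem_setOf_eq] at hp
      rcases hp with ⟨h, -⟩ | ⟨h, -, -⟩ | ⟨h, -⟩
      · exact F.att_dom p h
      · exact ⟨(F.att_dom _ h).2, (F.att_dom _ h).1⟩
      · exact F.att_dom p h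
    · exact absurd hp (Set.notMem_empty p)

/-- `Image_i`: the class of CAFs obtainable by applying Reduction `i` to a PCAF. -/
def ImageI (i : ℕ) : Set CAF := {F | ∃ G : PCAF, Red i G = F}

/-- `ImageTrans_i`: the class of CAFs obtainable by applying Reduction `i`
to a PCAF with a transitive preference relation. -/
def ImageTransI (i : ℕ) : Set CAF :=
  {F | ∃ G : PCAF, Transitive G.pref ∧ Red i G = F}

/-- The class of well-formed CAFs. -/
def wfCAFs : Set CAF := {F | F.wf}

/-- The preference-claim-based variant `σ_p^i` of a semantics `σ`. -/
def prefSem (σ : CAF → Set ℕ → Prop) (i : ℕ) (F : PCAF) : Set (Set ℕ) :=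
  CAF.claimSem σ (Red i F)

/-- `E_0(C)`: all arguments of `F` with a claim in `C`. -/
def E0 (F : PCAF) (C : Set ℕ) : Set ℕ := {a | a ∈ F.args ∧ F.claim a ∈ C}

/-- `E_1^i(C)`: the arguments of `E_0(C)` not attacked by `E_0(C)` in the
underlying AF of `F` (this set does not depend on `i`). -/
def E1 (F : PCAF) (C : Set ℕ) : Set ℕ :=
  E0 F C \ {b | ∃ a ∈ E0 F C, (a, b) ∈ F.att}

/-- The sequence `E_k^i(C)`. -/
def Ek (F : PCAF) (i : ℕ) (C : Set ℕ) : ℕ → Set ℕ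
  | 0 => E0 F C
  | 1 => E1 F C
  | (k + 2) => {x | x ∈ Ek F i C (k + 1) ∧ (Red i F).defends (Ek F i C (k + 1)) x}

/-- `E_*^i(C)`: the fixed point of the sequence `E_k^i(C)` (reached after at
most `|A|` steps, since the sequence is ⊆-decreasing from index 1 on). -/
def Estar (F : PCAF) (i : ℕ) (C : Set ℕ) : Set ℕ := Ek F i C (F.args.card + 2)

-- helper lemmas
lemma stb_adm (G : CAF) (S : Set ℕ) (h : G.stb S) : G.adm S := by
  refine ⟨h.1, fun a ha b hb => ?_⟩
  have hbA : b ∈ G.args := (G.att_dom _ hb).1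
  have hbS : b ∉ S := fun hbS => h.1.2 b hbS a ha hb
  exact h.2 b hbA hbS

lemma stb_range (G : CAF) (S : Set ℕ) (h : G.stb S) : G.range S = ↑G.args := by
  ext a
  constructor
  · rintro (hS | ⟨b, hbS, hatt⟩)
    · exact h.1.1 hS
    · exact_mod_cast (G.att_dom _ hatt).2
  · intro ha
    by_cases hS : a ∈ S
    · exact Or.inl hS
    · exact Or.inr (h.2 a (by exact_mod_cast ha) hS)

lemma range_sub (G : CAF) (T : Set ℕ) (hT : T ⊆ ↑G.args) : G.range T ⊆ ↑G.args := by
  rintro a (hS | ⟨b, hbS, hatt⟩)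
  · exact hT hS
  · exact_mod_cast (G.att_dom _ hatt).2

lemma stb_prf (G : CAF) (S : Set ℕ) (h : G.stb S) : G.prf S := by
  refine ⟨stb_adm G S h, ?_⟩
  rintro ⟨T, hT, hST, hTS⟩
  obtain ⟨t, htT, htS⟩ := Set.not_subset.mp hTS
  obtain ⟨a, haS, hatt⟩ := h.2 t (hT.1.1 htT) htS
  exact hT.1.2 a (hST haS) t htT hatt

lemma stb_sem (G : CAF) (S : Set ℕ) (h : G.stb S) : G.sem S := by
  refine ⟨stb_adm G S h, ?_⟩
  rintro ⟨T, hT, hsub, hnsub⟩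
  exact hnsub ((range_sub G T hT.1.1).trans (stb_range G S h).ge)

lemma stb_stg (G : CAF) (S : Set ℕ) (h : G.stb S) : G.stg S := by
  refine ⟨h.1, ?_⟩
  rintro ⟨T, hT, hsub, hnsub⟩
  exact hnsub ((range_sub G T hT.1).trans (stb_range G S h).ge)

-- concrete examples
/-- Example PCAF for Reduction 1. -/
def F1 : PCAF where
  args := {0, 1, 2}
  att := {p | (p.1 = 0 ∧ p.2 = 2) ∨ (p.1 = 1 ∧ p.2 = 2) ∨ (p.1 = 2 ∧ p.2 = 0)}
  claim := fun a => if a ≤ 1 then 0 else 1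
  att_dom := by rintro ⟨a, b⟩ hp; simp only [Set.mem_setOf_eq] at hp; simp; omega
  pref := fun a b => a = 2 ∧ b = 1
  pref_dom := by intro a b h; simp; omega
  pref_asymm := by intro a b h h'; omega
  isWf := by
    intro a ha b hb hcl c
    simp only [CAF.wf, Set.mem_setOf_eq]
    fin_cases ha <;> fin_cases hb <;> simp_all

lemma F1_trans : Transitive F1.pref := by
  intro a b c h1 h2
  have h1' : a = 2 ∧ b = 1 := h1
  have h2' : b = 2 ∧ c = 1 := h2
  exact absurd rfl (by omega : ¬ (0:ℕ) = 0)

lemma F1_att : redAtt 1 F1 = {p | (p.1 = 0 ∧ p.2 = 2) ∨ (p.1 = 2 ∧ p.2 = 0)} := by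
  ext ⟨a, b⟩
  show ((a, b).1 = 0 ∧ (a, b).2 = 2 ∨ (a, b).1 = 1 ∧ (a, b).2 = 2 ∨ (a, b).1 = 2 ∧ (a, b).2 = 0) ∧ ¬(b = 2 ∧ a = 1) ↔ _
  simp only [Set.mem_setOf_eq]
  omega

/-- Example PCAF for Reductions 2 and 4. -/
def F6 : PCAF where
  args := {0, 1, 2, 3, 4, 5}
  att := {p | (p.1 = 4 ∧ p.2 = 0) ∨ (p.1 = 4 ∧ p.2 = 2) ∨ (p.1 = 5 ∧ p.2 = 2) ∨ (p.1 = 5 ∧ p.2 = 0)}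
  claim := fun a => if a ≤ 1 then 0 else if a ≤ 3 then 1 else if a = 4 then 2 else 3
  att_dom := by rintro ⟨a, b⟩ hp; simp only [Set.mem_setOf_eq] at hp; simp; omega
  pref := fun a b => (a = 2 ∧ b = 4) ∨ (a = 0 ∧ b = 5)
  pref_dom := by intro a b h; simp; omega
  pref_asymm := by intro a b h h'; omega
  isWf := by
    intro a ha b hb hcl c
    simp only [CAF.wf, Set.mem_setOf_eq]
    fin_cases ha <;> fin_cases hb <;> simp_all

lemma F6_trans : Transitive F6.pref := by
  intro a b c h1 h2
  have h1' : (a = 2 ∧ b = 4) ∨ (a = 0 ∧ b = 5) := h1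
  have h2' : (b = 2 ∧ c = 4) ∨ (b = 0 ∧ c = 5) := h2
  exact absurd rfl (by omega : ¬ (0:ℕ) = 0)

lemma redAtt_two (F : PCAF) : redAtt 2 F = {p | (p ∈ F.att ∧ ¬ F.pref p.2 p.1) ∨
    ((p.2, p.1) ∈ F.att ∧ p ∉ F.att ∧ F.pref p.1 p.2)} := by norm_num [redAtt]

lemma redAtt_four (F : PCAF) : redAtt 4 F = {p | (p ∈ F.att ∧ ¬ F.pref p.2 p.1) ∨
    ((p.2, p.1) ∈ F.att ∧ p ∉ F.att ∧ F.pref p.1 p.2) ∨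
    (p ∈ F.att ∧ (p.2, p.1) ∉ F.att)} := by norm_num [redAtt]

lemma F6_att_eq : F6.att = {p : ℕ × ℕ | (p.1 = 4 ∧ p.2 = 0) ∨ (p.1 = 4 ∧ p.2 = 2) ∨ (p.1 = 5 ∧ p.2 = 2) ∨ (p.1 = 5 ∧ p.2 = 0)} := rfl

lemma F6_pref_eq : F6.pref = fun a b => (a = 2 ∧ b = 4) ∨ (a = 0 ∧ b = 5) := rfl

lemma F6_att2 : redAtt 2 F6 =
    {p | (p.1 = 4 ∧ p.2 = 0) ∨ (p.1 = 2 ∧ p.2 = 4) ∨ (p.1 = 5 ∧ p.2 = 2) ∨ (p.1 = 0 ∧ p.2 = 5)} := by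
  rw [redAtt_two]
  ext ⟨a, b⟩
  simp only [Set.mem_setOf_eq, F6_att_eq, F6_pref_eq]
  omega

lemma F6_att4 : redAtt 4 F6 =
    {p | (p.1 = 4 ∧ p.2 = 0) ∨ (p.1 = 2 ∧ p.2 = 4) ∨ (p.1 = 5 ∧ p.2 = 2) ∨ (p.1 = 0 ∧ p.2 = 5) ∨
         (p.1 = 4 ∧ p.2 = 2) ∨ (p.1 = 5 ∧ p.2 = 0)} := by
  rw [redAtt_four]
  ext ⟨a, b⟩
  simp only [Set.mem_setOf_eq, F6_att_eq, F6_pref_eq]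
  constructor
  · rintro (⟨(⟨rfl, rfl⟩ | ⟨rfl, rfl⟩ | ⟨rfl, rfl⟩ | ⟨rfl, rfl⟩), hn⟩ |
            ⟨(⟨rfl, rfl⟩ | ⟨rfl, rfl⟩ | ⟨rfl, rfl⟩ | ⟨rfl, rfl⟩), hn, hp⟩ |
            ⟨(⟨rfl, rfl⟩ | ⟨rfl, rfl⟩ | ⟨rfl, rfl⟩ | ⟨rfl, rfl⟩), hn⟩) <;>
      (try revert hp) <;> revert hn <;> decide
  · rintro (⟨rfl, rfl⟩ | ⟨rfl, rfl⟩ | ⟨rfl, rfl⟩ | ⟨rfl, rfl⟩ | ⟨rfl, rfl⟩ | ⟨rfl, rfl⟩) <;> decide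

lemma F1_args : F1.args = {0, 1, 2} := rfl
lemma F6_args : F6.args = {0, 1, 2, 3, 4, 5} := rfl
lemma Red_args (i : ℕ) (F : PCAF) : (Red i F).args = F.args := rfl
lemma Red_att (i : ℕ) (F : PCAF) : (Red i F).att = redAtt i F := rfl
lemma Red_claim (i : ℕ) (F : PCAF) : (Red i F).claim = F.claim := rfl

lemma stb1_E1 : (Red 1 F1).stb {0, 1} := by
  refine ⟨⟨?_, ?_⟩, ?_⟩
  · intro a ha
    simp only [Set.mem_insert_iff, Set.mem_singleton_iff] at ha
    show a ∈ F1.args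
    rw [F1_args]
    simp only [Finset.mem_insert, Finset.mem_singleton]
    omega
  · intro a ha b hb
    rw [Red_att, F1_att]
    simp only [Set.mem_insert_iff, Set.mem_singleton_iff] at ha hb
    simp only [Set.mem_setOf_eq]
    omega
  · intro a haA ha
    have h6 : a = 0 ∨ a = 1 ∨ a = 2 := by
      have := haA
      rw [Red_args, F1_args] at this
      simpa using this
    simp only [Set.mem_insert_iff, Set.mem_singleton_iff] at ha
    have : a = 2 := by omega
    subst this
    exact ⟨0, by simp, by rw [Red_att, F1_att]; exact Or.inl ⟨rfl, rfl⟩⟩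

lemma stb1_E2 : (Red 1 F1).stb {1, 2} := by
  refine ⟨⟨?_, ?_⟩, ?_⟩
  · intro a ha
    simp only [Set.mem_insert_iff, Set.mem_singleton_iff] at ha
    show a ∈ F1.args
    rw [F1_args]
    simp only [Finset.mem_insert, Finset.mem_singleton]
    omega
  · intro a ha b hb
    rw [Red_att, F1_att]
    simp only [Set.mem_insert_iff, Set.mem_singleton_iff] at ha hb
    simp only [Set.mem_setOf_eq]
    omega
  · intro a haA ha
    have h6 : a = 0 ∨ a = 1 ∨ a = 2 := by
      have := haA
      rw [Red_args, F1_args] at this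
      simpa using this
    simp only [Set.mem_insert_iff, Set.mem_singleton_iff] at ha
    have : a = 0 := by omega
    subst this
    exact ⟨2, by simp, by rw [Red_att, F1_att]; exact Or.inr ⟨rfl, rfl⟩⟩

lemma stb6_E1 (i : ℕ) (hi : i = 2 ∨ i = 4) : (Red i F6).stb {0, 1, 2, 3} := by
  have hatt : (Red i F6).att ⊆ {p | (p.1 = 4 ∧ p.2 = 0) ∨ (p.1 = 2 ∧ p.2 = 4) ∨ (p.1 = 5 ∧ p.2 = 2) ∨ (p.1 = 0 ∧ p.2 = 5) ∨
         (p.1 = 4 ∧ p.2 = 2) ∨ (p.1 = 5 ∧ p.2 = 0)} := by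
    rw [Red_att]
    rcases hi with rfl | rfl
    · rw [F6_att2]; intro p hp; simp only [Set.mem_setOf_eq] at hp ⊢; try tauto
    · rw [F6_att4]
  have hmem24 : ((2 : ℕ), (4 : ℕ)) ∈ (Red i F6).att ∧ ((0 : ℕ), (5 : ℕ)) ∈ (Red i F6).att := by
    rw [Red_att]
    rcases hi with rfl | rfl
    · rw [F6_att2]
      exact ⟨Or.inr (Or.inl ⟨rfl, rfl⟩), Or.inr (Or.inr (Or.inr ⟨rfl, rfl⟩))⟩
    · rw [F6_att4]
      exact ⟨Or.inr (Or.inl ⟨rfl, rfl⟩), Or.inr (Or.inr (Or.inr (Or.inl ⟨rfl, rfl⟩)))⟩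
  refine ⟨⟨?_, ?_⟩, ?_⟩
  · intro a ha
    simp only [Set.mem_insert_iff, Set.mem_singleton_iff] at ha
    show a ∈ F6.args
    rw [F6_args]
    simp only [Finset.mem_insert, Finset.mem_singleton]
    omega
  · intro a ha b hb hab
    have := hatt hab
    simp only [Set.mem_insert_iff, Set.mem_singleton_iff] at ha hb
    simp only [Set.mem_setOf_eq] at this
    omega
  · intro a haA ha
    have h6 : a = 0 ∨ a = 1 ∨ a = 2 ∨ a = 3 ∨ a = 4 ∨ a = 5 := by
      have := haA
      rw [Red_args, F6_args] at this
      simpa using this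
    simp only [Set.mem_insert_iff, Set.mem_singleton_iff] at ha
    have : a = 4 ∨ a = 5 := by omega
    rcases this with rfl | rfl
    · exact ⟨2, by simp, hmem24.1⟩
    · exact ⟨0, by simp, hmem24.2⟩

lemma stb6_E2 (i : ℕ) (hi : i = 2 ∨ i = 4) : (Red i F6).stb {1, 3, 4, 5} := by
  have hatt : (Red i F6).att ⊆ {p | (p.1 = 4 ∧ p.2 = 0) ∨ (p.1 = 2 ∧ p.2 = 4) ∨ (p.1 = 5 ∧ p.2 = 2) ∨ (p.1 = 0 ∧ p.2 = 5) ∨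
         (p.1 = 4 ∧ p.2 = 2) ∨ (p.1 = 5 ∧ p.2 = 0)} := by
    rw [Red_att]
    rcases hi with rfl | rfl
    · rw [F6_att2]; intro p hp; simp only [Set.mem_setOf_eq] at hp ⊢; try tauto
    · rw [F6_att4]
  have hmem : ((4 : ℕ), (0 : ℕ)) ∈ (Red i F6).att ∧ ((5 : ℕ), (2 : ℕ)) ∈ (Red i F6).att := by
    rw [Red_att]
    rcases hi with rfl | rfl
    · rw [F6_att2]
      exact ⟨Or.inl ⟨rfl, rfl⟩, Or.inr (Or.inr (Or.inl ⟨rfl, rfl⟩))⟩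
    · rw [F6_att4]
      exact ⟨Or.inl ⟨rfl, rfl⟩, Or.inr (Or.inr (Or.inl ⟨rfl, rfl⟩))⟩
  refine ⟨⟨?_, ?_⟩, ?_⟩
  · intro a ha
    simp only [Set.mem_insert_iff, Set.mem_singleton_iff] at ha
    show a ∈ F6.args
    rw [F6_args]
    simp only [Finset.mem_insert, Finset.mem_singleton]
    omega
  · intro a ha b hb hab
    have := hatt hab
    simp only [Set.mem_insert_iff, Set.mem_singleton_iff] at ha hb
    simp only [Set.mem_setOf_eq] at this
    omega
  · intro a haA ha
    have h6 : a = 0 ∨ a = 1 ∨ a = 2 ∨ a = 3 ∨ a = 4 ∨ a = 5 := by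
      have := haA
      rw [Red_args, F6_args] at this
      simpa using this
    simp only [Set.mem_insert_iff, Set.mem_singleton_iff] at ha
    have : a = 0 ∨ a = 2 := by omega
    rcases this with rfl | rfl
    · exact ⟨4, by simp, hmem.1⟩
    · exact ⟨5, by simp, hmem.2⟩

lemma F1_claim_im1 : F1.claim '' {0, 1} = {0} := by
  rw [Set.image_insert_eq, Set.image_singleton]
  norm_num [show F1.claim 0 = 0 from rfl, show F1.claim 1 = 0 from rfl]

lemma F1_claim_im2 : F1.claim '' {1, 2} = {0, 1} := by
  rw [Set.image_insert_eq, Set.image_singleton]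
  norm_num [show F1.claim 1 = 0 from rfl, show F1.claim 2 = 1 from rfl]

lemma F6_claim_im1 : F6.claim '' {0, 1, 2, 3} = {0, 1} := by
  rw [Set.image_insert_eq, Set.image_insert_eq, Set.image_insert_eq, Set.image_singleton]
  rw [show F6.claim 0 = 0 from rfl, show F6.claim 1 = 0 from rfl,
      show F6.claim 2 = 1 from rfl, show F6.claim 3 = 1 from rfl]
  ext x
  simp only [Set.mem_insert_iff, Set.mem_singleton_iff]
  omega

lemma F6_claim_im2 : F6.claim '' {1, 3, 4, 5} = {0, 1, 2, 3} := by
  rw [Set.image_insert_eq, Set.image_insert_eq, Set.image_insert_eq, Set.image_singleton]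
  rw [show F6.claim 1 = 0 from rfl, show F6.claim 3 = 1 from rfl,
      show F6.claim 4 = 2 from rfl, show F6.claim 5 = 3 from rfl]

lemma ssub1 : ({0} : Set ℕ) ⊂ {0, 1} := by
  rw [Set.ssubset_def]
  constructor
  · intro x hx; simp only [Set.mem_singleton_iff] at hx; simp [hx]
  · intro h
    have := h (show (1 : ℕ) ∈ ({0, 1} : Set ℕ) by simp)
    simp at this

lemma ssub2 : ({0, 1} : Set ℕ) ⊂ {0, 1, 2, 3} := by
  rw [Set.ssubset_def]
  constructor
  · intro x hx; simp only [Set.mem_insert_iff, Set.mem_singleton_iff] at hx ⊢; omega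
  · intro h
    have := h (show (2 : ℕ) ∈ ({0, 1, 2, 3} : Set ℕ) by simp)
    simp at this

/-- For every `σ ∈ {prf, stb, sem, stg}` and every `i ∈ {1,2,4}`, the semantics
`σ_p^i` is not I-maximal for PCAFs, even for transitive preferences. -/
theorem stmt_12 :
    ∀ σ ∈ ({CAF.prf, CAF.stb, CAF.sem, CAF.stg} : Set (CAF → Set ℕ → Prop)),
      ∀ i ∈ ({1, 2, 4} : Set ℕ),
        ∃ F : PCAF, Transitive F.pref ∧
          ∃ S T : Set ℕ, S ∈ prefSem σ i F ∧ T ∈ prefSem σ i F ∧ S ⊂ T := by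
  intro σ hσ i hi
  have key : ∀ (G : CAF) (E : Set ℕ), G.stb E → σ G E := by
    simp only [Set.mem_insert_iff, Set.mem_singleton_iff] at hσ
    rcases hσ with rfl | rfl | rfl | rfl
    · exact stb_prf
    · exact fun G E h => h
    · exact stb_sem
    · exact stb_stg
  simp only [Set.mem_insert_iff, Set.mem_singleton_iff] at hi
  rcases hi with rfl | rfl | rfl
  · refine ⟨F1, F1_trans, F1.claim '' {0, 1}, F1.claim '' {1, 2},
      ⟨{0, 1}, key _ _ stb1_E1, rfl⟩, ⟨{1, 2}, key _ _ stb1_E2, rfl⟩, ?_⟩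
    rw [F1_claim_im1, F1_claim_im2]
    exact ssub1
  · refine ⟨F6, F6_trans, F6.claim '' {0, 1, 2, 3}, F6.claim '' {1, 3, 4, 5},
      ⟨{0, 1, 2, 3}, key _ _ (stb6_E1 2 (Or.inl rfl)), rfl⟩,
      ⟨{1, 3, 4, 5}, key _ _ (stb6_E2 2 (Or.inl rfl)), rfl⟩, ?_⟩
    rw [F6_claim_im1, F6_claim_im2]
    exact ssub2
  · refine ⟨F6, F6_trans, F6.claim '' {0, 1, 2, 3}, F6.claim '' {1, 3, 4, 5},
      ⟨{0, 1, 2, 3}, key _ _ (stb6_E1 4 (Or.inr rfl)), rfl⟩,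
      ⟨{1, 3, 4, 5}, key _ _ (stb6_E2 4 (Or.inr rfl)), rfl⟩, ?_⟩
    rw [F6_claim_im1, F6_claim_im2]
    exact ssub2
end

section
/- Let F be a PCAF, C a set of claims, and i ∈ {2,3,4}. Then C ∈ cf_p^i(F) if and only if claim(E_1^i(C)) = C. Moreover, if C ∈ cf_p^i(F), then E_1^i(C) is the unique ⊆-maximal conflict-free set S in Red_i(F) with claim(S) = C: E_1^i(C) is conflict-free in Red_i(F), and every conflict-free set S in Red_i(F) with claim(S) = C satisfies S ⊆ E_1^i(C). -/
lemma redAtt_sub {i : ℕ} (hi : i ∈ ({2, 3, 4} : Set ℕ)) (F : PCAF) {a b : ℕ}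
    (h : (a, b) ∈ redAtt i F) : (a, b) ∈ F.att ∨ (b, a) ∈ F.att := by
  unfold redAtt at h
  rcases hi with rfl | rfl | rfl <;>
    simp only [Set.mem_setOf_eq, if_true, if_false] at h <;>
    norm_num at h <;> tauto

lemma att_or {i : ℕ} (hi : i ∈ ({2, 3, 4} : Set ℕ)) (F : PCAF) {a b : ℕ}
    (h : (a, b) ∈ F.att) : (a, b) ∈ redAtt i F ∨ (b, a) ∈ redAtt i F := by
  have hasym := F.pref_asymm b a
  unfold redAtt
  rcases hi with rfl | rfl | rfl <;>
    norm_num <;> by_cases hp : F.pref b a <;> by_cases hr : (b, a) ∈ F.att <;> tauto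

lemma cf_red_iff {i : ℕ} (hi : i ∈ ({2, 3, 4} : Set ℕ)) (F : PCAF) (S : Set ℕ) :
    (Red i F).cf S ↔ F.toCAF.cf S := by
  constructor
  · rintro ⟨h1, h2⟩
    refine ⟨h1, fun a ha b hb hab => ?_⟩
    rcases att_or hi F hab with h | h
    · exact h2 a ha b hb h
    · exact h2 b hb a ha h
  · rintro ⟨h1, h2⟩
    refine ⟨h1, fun a ha b hb hab => ?_⟩
    rcases redAtt_sub hi F hab with h | h
    · exact h2 a ha b hb h
    · exact h2 b hb a ha h

/-- For `i ∈ {2,3,4}`: `C ∈ cf_p^i(F)` iff `claim(E_1^i(C)) = C`; moreover, if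
`C ∈ cf_p^i(F)` then `E_1^i(C)` is the unique ⊆-maximal conflict-free set `S` of
`Red_i(F)` with `claim(S) = C`. -/
theorem stmt_13 (F : PCAF) (C : Set ℕ) :
    ∀ i ∈ ({2, 3, 4} : Set ℕ),
      (C ∈ prefSem CAF.cf i F ↔ F.claim '' E1 F C = C) ∧
      (C ∈ prefSem CAF.cf i F →
        (Red i F).cf (E1 F C) ∧
        ∀ S : Set ℕ, (Red i F).cf S → F.claim '' S = C → S ⊆ E1 F C) := by
  intro i hi
  -- E1 is always cf in the underlying AF
  have hE1sub : E1 F C ⊆ E0 F C := Set.diff_subset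
  have hE1cf : F.toCAF.cf (E1 F C) := by
    refine ⟨fun a ha => (hE1sub ha).1, fun a ha b hb hab => ?_⟩
    exact hb.2 ⟨a, hE1sub ha, hab⟩
  have hE1claim : F.claim '' E1 F C ⊆ C := by
    rintro _ ⟨a, ha, rfl⟩; exact (hE1sub ha).2
  -- any cf set with claims C is contained in E1
  have hmax : ∀ S : Set ℕ, F.toCAF.cf S → F.claim '' S = C → S ⊆ E1 F C := by
    intro S hScf hSc b hb
    have hbE0 : b ∈ E0 F C := ⟨hScf.1 hb, hSc ▸ ⟨b, hb, rfl⟩⟩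
    refine ⟨hbE0, ?_⟩
    rintro ⟨a, haE0, hab⟩
    have : F.claim a ∈ F.claim '' S := hSc.symm ▸ haE0.2
    obtain ⟨a', ha'S, ha'c⟩ := this
    have ha'att : (a', b) ∈ F.att :=
      (F.isWf a' (hScf.1 ha'S) a haE0.1 ha'c b).2 hab
    exact hScf.2 a' ha'S b hb ha'att
  constructor
  · constructor
    · rintro ⟨S, hScf, hSc⟩
      have hScf' := (cf_red_iff hi F S).1 hScf
      have hSsub := hmax S hScf' hSc
      apply Set.Subset.antisymm hE1claim
      intro x hx; rw [← hSc] at hx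
      exact Set.image_mono (f := F.claim) hSsub hx
    · intro h
      exact ⟨E1 F C, (cf_red_iff hi F _).2 hE1cf, h⟩
  · rintro ⟨S, hScf, hSc⟩
    refine ⟨(cf_red_iff hi F _).2 hE1cf, fun T hTcf hTc => ?_⟩
    exact hmax T ((cf_red_iff hi F T).1 hTcf) hTc
end

section
/- Let F be a PCAF, C a set of claims, and i ∈ {2,3,4}. Then C ∈ adm_p^i(F) if and only if claim(E_*^i(C)) = C. Moreover, if C ∈ adm_p^i(F), then E_*^i(C) is the unique ⊆-maximal admissible set S in Red_i(F) with claim(S) = C: E_*^i(C) is admissible in Red_i(F), and every admissible set S in Red_i(F) with claim(S) = C satisfies S ⊆ E_*^i(C). -/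
section Aux

variable (F : PCAF) (i : ℕ) (C : Set ℕ)

lemma red_sub (hi : i ∈ ({2, 3, 4} : Set ℕ)) {a b : ℕ}
    (h : (a, b) ∈ (Red i F).att) : (a, b) ∈ F.att ∨ (b, a) ∈ F.att := by
  rcases hi with rfl | rfl | rfl <;>
    simp only [Red, redAtt, if_true, if_false, Set.mem_setOf_eq] at h <;>
    simp_all <;> tauto

lemma red_total (hi : i ∈ ({2, 3, 4} : Set ℕ)) {a b : ℕ}
    (h : (a, b) ∈ F.att) : (a, b) ∈ (Red i F).att ∨ (b, a) ∈ (Red i F).att := by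
  have hasym := F.pref_asymm a b
  have hasym' := F.pref_asymm b a
  rcases hi with rfl | rfl | rfl <;>
    simp only [Red, redAtt, if_true, if_false, Set.mem_setOf_eq] <;>
    simp_all <;> by_cases hp : F.pref b a <;> by_cases hq : (b, a) ∈ F.att <;> tauto

lemma cfR_of_cfD (hi : i ∈ ({2, 3, 4} : Set ℕ)) {S : Set ℕ}
    (h : (Red i F).cf S) : F.toCAF.cf S := by
  refine ⟨h.1, fun a ha b hb hab => ?_⟩
  rcases red_total F i hi hab with hd | hd
  · exact h.2 a ha b hb hd
  · exact h.2 b hb a ha hd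

lemma cf_mono {G : CAF} {S T : Set ℕ} (hST : S ⊆ T) (h : G.cf T) : G.cf S :=
  ⟨hST.trans h.1, fun a ha b hb => h.2 a (hST ha) b (hST hb)⟩

lemma defends_mono {G : CAF} {S T : Set ℕ} (hST : S ⊆ T) {a : ℕ}
    (h : G.defends S a) : G.defends T a := by
  intro b hb
  obtain ⟨c, hc, hcb⟩ := h b hb
  exact ⟨c, hST hc, hcb⟩

lemma E1_sub_E0 : E1 F C ⊆ E0 F C := Set.diff_subset

lemma E0_sub_args : E0 F C ⊆ ↑F.args := fun _ h => h.1

lemma Ek_antitone : ∀ k, Ek F i C (k + 1) ⊆ Ek F i C k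
  | 0 => E1_sub_E0 F C
  | (k + 1) => fun _ h => h.1

lemma Ek_sub_E1 : ∀ k, Ek F i C (k + 1) ⊆ E1 F C
  | 0 => fun _ h => h
  | (k + 1) => fun x h => Ek_sub_E1 k (Ek_antitone F i C (k + 1) h)

lemma cf_E1 (hi : i ∈ ({2, 3, 4} : Set ℕ)) : (Red i F).cf (E1 F C) := by
  refine ⟨fun x hx => (E1_sub_E0 F C hx).1, fun a ha b hb hab => ?_⟩
  rcases red_sub F i hi hab with hr | hr
  · exact hb.2 ⟨a, ha.1, hr⟩
  · exact ha.2 ⟨b, hb.1, hr⟩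

lemma S_sub_E1 (hi : i ∈ ({2, 3, 4} : Set ℕ)) {S : Set ℕ}
    (hadm : (Red i F).adm S) (hc : F.claim '' S = C) : S ⊆ E1 F C := by
  have hcfR := cfR_of_cfD F i hi hadm.1
  intro x hx
  have hx0 : x ∈ E0 F C := ⟨hadm.1.1 hx, hc ▸ ⟨x, hx, rfl⟩⟩
  refine ⟨hx0, ?_⟩
  rintro ⟨a, ha, hax⟩
  have : F.claim a ∈ C := ha.2
  rw [← hc] at this
  obtain ⟨a', ha', hca⟩ := this
  have := (F.isWf a ha.1 a' (hcfR.1 ha') hca.symm x).mp hax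
  exact hcfR.2 a' ha' x hx this

lemma S_sub_Ek (hi : i ∈ ({2, 3, 4} : Set ℕ)) {S : Set ℕ}
    (hadm : (Red i F).adm S) (hc : F.claim '' S = C) :
    ∀ k, S ⊆ Ek F i C (k + 1)
  | 0 => S_sub_E1 F i C hi hadm hc
  | (k + 1) => fun x hx =>
      ⟨S_sub_Ek hi hadm hc k hx,
       defends_mono (S_sub_Ek hi hadm hc k) (hadm.2 x hx)⟩

lemma Ek_fin (k : ℕ) : (Ek F i C k).Finite := by
  apply Set.Finite.subset F.args.finite_toSet
  match k with
  | 0 => exact E0_sub_args F C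
  | (k + 1) => exact (Ek_sub_E1 F i C k).trans ((E1_sub_E0 F C).trans (E0_sub_args F C))

lemma fix_step {k : ℕ} (h : Ek F i C (k + 2) = Ek F i C (k + 1)) :
    Ek F i C (k + 3) = Ek F i C (k + 2) := by
  show {x | x ∈ Ek F i C (k + 2) ∧ (Red i F).defends (Ek F i C (k + 2)) x} =
       {x | x ∈ Ek F i C (k + 1) ∧ (Red i F).defends (Ek F i C (k + 1)) x}
  rw [h]

lemma fix_prop {k : ℕ} (h : Ek F i C (k + 2) = Ek F i C (k + 1)) :
    ∀ j, Ek F i C (k + 2 + j) = Ek F i C (k + 1 + j)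
  | 0 => h
  | (j + 1) => by
      have := fix_step F i C (k := k + j) (by
        rw [show k + j + 2 = k + 2 + j by omega, show k + j + 1 = k + 1 + j by omega]
        exact fix_prop h j)
      rw [show k + 2 + (j + 1) = k + j + 3 by omega, show k + 1 + (j + 1) = k + j + 2 by omega]
      exact this

lemma card_chain :
    ∀ m : ℕ, (∀ k < m, Ek F i C (k + 2) ≠ Ek F i C (k + 1)) →
      (Ek F i C (m + 1)).ncard + m ≤ (Ek F i C 1).ncard
  | 0, _ => by simp
  | (m + 1), h => by
      have ih := card_chain m (fun k hk => h k (by omega))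
      have hne := h m (by omega)
      have hss : Ek F i C (m + 2) ⊂ Ek F i C (m + 1) :=
        ⟨Ek_antitone F i C (m + 1), fun hle =>
          hne (le_antisymm (Ek_antitone F i C (m + 1)) hle)⟩
      have hlt := Set.ncard_lt_ncard hss (Ek_fin F i C (m + 1))
      show (Ek F i C (m + 2)).ncard + (m + 1) ≤ _
      omega

lemma stab : Ek F i C (F.args.card + 2) = Ek F i C (F.args.card + 1) := by
  set n := F.args.card with hn
  have hE1 : (Ek F i C 1).ncard ≤ n := by
    have : (Ek F i C 1) ⊆ ↑F.args :=
      (E1_sub_E0 F C).trans (E0_sub_args F C)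
    calc (Ek F i C 1).ncard ≤ (↑F.args : Set ℕ).ncard :=
          Set.ncard_le_ncard this F.args.finite_toSet
      _ = n := by rw [Set.ncard_coe_finset]
  by_contra hne
  have hall : ∀ k ≤ n, Ek F i C (k + 2) ≠ Ek F i C (k + 1) := by
    intro k hk heq
    have := fix_prop F i C heq (n - k)
    rw [show k + 2 + (n - k) = n + 2 by omega, show k + 1 + (n - k) = n + 1 by omega] at this
    exact hne this
  have := card_chain F i C (n + 1) (fun k hk => hall k (by omega))
  omega

lemma Estar_adm (hi : i ∈ ({2, 3, 4} : Set ℕ)) : (Red i F).adm (Estar F i C) := by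
  constructor
  · exact cf_mono (Ek_sub_E1 F i C (F.args.card + 1)) (cf_E1 F i C hi)
  · intro a ha
    have hdef : (Red i F).defends (Ek F i C (F.args.card + 1)) a := ha.2
    rw [← stab F i C] at hdef
    exact hdef

lemma claim_Estar_sub : F.claim '' Estar F i C ⊆ C := by
  rintro c ⟨x, hx, rfl⟩
  exact ((E1_sub_E0 F C) (Ek_sub_E1 F i C (F.args.card + 1) hx)).2

end Aux

/-- For `i ∈ {2,3,4}`: `C ∈ adm_p^i(F)` iff `claim(E_*^i(C)) = C`; moreover, if
`C ∈ adm_p^i(F)` then `E_*^i(C)` is the unique ⊆-maximal admissible set `S` of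
`Red_i(F)` with `claim(S) = C`. -/
theorem stmt_14 (F : PCAF) (C : Set ℕ) :
    ∀ i ∈ ({2, 3, 4} : Set ℕ),
      (C ∈ prefSem CAF.adm i F ↔ F.claim '' Estar F i C = C) ∧
      (C ∈ prefSem CAF.adm i F →
        (Red i F).adm (Estar F i C) ∧
        ∀ S : Set ℕ, (Red i F).adm S → F.claim '' S = C → S ⊆ Estar F i C) := by
  intro i hi
  constructor
  · constructor
    · rintro ⟨S, hadm, hc⟩
      refine le_antisymm (claim_Estar_sub F i C) ?_
      have h2 : S ⊆ Estar F i C := S_sub_Ek F i C hi hadm hc (F.args.card + 1)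
      intro c hcmem
      rw [← hc] at hcmem
      obtain ⟨x, hx, rfl⟩ := hcmem
      exact ⟨x, h2 hx, rfl⟩
    · intro h
      exact ⟨Estar F i C, Estar_adm F i C hi, h⟩
  · rintro ⟨S, hadm, hc⟩
    exact ⟨Estar_adm F i C hi, fun T h1 h2 => S_sub_Ek F i C hi h1 h2 (F.args.card + 1)⟩
end

section
/- Let F be a PCAF and C a set of claims. Then C ∈ com_p^3(F) if and only if claim(E_*^3(C)) = C and E_*^3(C) is a complete extension of Red_3(F). In particular, if claim(E_*^3(C)) = C but E_*^3(C) is not complete in Red_3(F), then no complete extension S of Red_3(F) satisfies claim(S) = C. -/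
namespace Stmt18Aux

lemma red3_att (F : PCAF) {a b : ℕ} :
    (a, b) ∈ (Red 3 F).att ↔
      ((a, b) ∈ F.att ∧ ¬ F.pref b a) ∨ ((a, b) ∈ F.att ∧ (b, a) ∉ F.att) := by
  simp [Red, redAtt]

lemma red3_sub (F : PCAF) {a b : ℕ} (h : (a, b) ∈ (Red 3 F).att) : (a, b) ∈ F.att := by
  rcases (red3_att F).mp h with ⟨h, -⟩ | ⟨h, -⟩ <;> exact h

lemma red3_total (F : PCAF) {a b : ℕ} (h : (a, b) ∈ F.att) :
    (a, b) ∈ (Red 3 F).att ∨ (b, a) ∈ (Red 3 F).att := by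
  by_cases hba : (b, a) ∈ F.att
  · by_cases hp : F.pref b a
    · exact Or.inr ((red3_att F).mpr (Or.inl ⟨hba, F.pref_asymm b a hp⟩))
    · exact Or.inl ((red3_att F).mpr (Or.inl ⟨h, hp⟩))
  · exact Or.inl ((red3_att F).mpr (Or.inr ⟨h, hba⟩))

lemma attack_transfer (F : PCAF) {S : Set ℕ} (hadm : (Red 3 F).adm S) {c b : ℕ}
    (hc : c ∈ F.args) (hcl : F.claim c ∈ F.claim '' S) (hcb : (c, b) ∈ F.att) :
    (Red 3 F).attacks S b := by
  obtain ⟨c', hc'S, hcl'⟩ := hcl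
  have hc'A : c' ∈ F.args := hadm.1.1 hc'S
  have hatt : (c', b) ∈ F.att := (F.isWf c' hc'A c hc hcl' b).mpr hcb
  rcases red3_total F hatt with h | h
  · exact ⟨c', hc'S, h⟩
  · exact hadm.2 c' hc'S b h

lemma Ek_two (F : PCAF) (C : Set ℕ) (m : ℕ) :
    Ek F 3 C (m + 2) =
      {x | x ∈ Ek F 3 C (m + 1) ∧ (Red 3 F).defends (Ek F 3 C (m + 1)) x} := rfl

lemma Ek_succ_sub (F : PCAF) (C : Set ℕ) (k : ℕ) :
    Ek F 3 C (k + 2) ⊆ Ek F 3 C (k + 1) := fun _ hx => hx.1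

lemma Ek_sub_E1 (F : PCAF) (C : Set ℕ) (k : ℕ) : Ek F 3 C (k + 1) ⊆ E1 F C := by
  induction k with
  | zero => exact fun x hx => hx
  | succ n ih => exact fun x hx => ih hx.1

lemma Ek_stab (F : PCAF) (C : Set ℕ) {k : ℕ}
    (h : Ek F 3 C (k + 1) = Ek F 3 C (k + 2)) :
    ∀ j, Ek F 3 C (k + 1 + j) = Ek F 3 C (k + 1) := by
  intro j
  induction j with
  | zero => rfl
  | succ n ih =>
      have hidx : k + 1 + (n + 1) = (k + n) + 2 := by ring
      rw [hidx]
      calc Ek F 3 C (k + n + 2)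
          = {x | x ∈ Ek F 3 C (k + n + 1) ∧
                (Red 3 F).defends (Ek F 3 C (k + n + 1)) x} := rfl
        _ = {x | x ∈ Ek F 3 C (k + 1) ∧ (Red 3 F).defends (Ek F 3 C (k + 1)) x} := by
              rw [show k + n + 1 = k + 1 + n from by ring, ih]
        _ = Ek F 3 C (k + 2) := rfl
        _ = Ek F 3 C (k + 1) := h.symm

lemma Ek_exists_fix (F : PCAF) (C : Set ℕ) :
    ∃ k, 1 ≤ k ∧ k ≤ F.args.card + 1 ∧ Ek F 3 C k = Ek F 3 C (k + 1) := by
  by_contra hcon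
  push_neg at hcon
  have hfin : ∀ k, (Ek F 3 C (k + 1)).Finite := fun k =>
    F.args.finite_toSet.subset fun x hx => (Ek_sub_E1 F C k hx).1.1
  have key : ∀ j, j ≤ F.args.card + 1 →
      (Ek F 3 C (j + 1)).ncard + j ≤ F.args.card := by
    intro j
    induction j with
    | zero =>
        intro _
        have h0 : Ek F 3 C 1 ⊆ ↑F.args := fun x hx => (Ek_sub_E1 F C 0 hx).1.1
        have := Set.ncard_le_ncard h0 F.args.finite_toSet
        simpa [Set.ncard_coe_finset] using this
    | succ n ih =>
        intro hle
        have hne := hcon (n + 1) (by omega) (by omega)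
        have hsub : Ek F 3 C (n + 2) ⊂ Ek F 3 C (n + 1) :=
          (Ek_succ_sub F C n).ssubset_of_ne (fun h => hne h.symm)
        have hlt : (Ek F 3 C (n + 1 + 1)).ncard < (Ek F 3 C (n + 1)).ncard :=
          Set.ncard_lt_ncard hsub (hfin n)
        have := ih (by omega)
        omega
  have := key (F.args.card + 1) le_rfl
  omega

lemma Estar_eq (F : PCAF) (C : Set ℕ) :
    Ek F 3 C (F.args.card + 3) = Estar F 3 C := by
  obtain ⟨k, hk1, hk2, hEq⟩ := Ek_exists_fix F C
  obtain ⟨m, rfl⟩ : ∃ m, k = m + 1 := ⟨k - 1, by omega⟩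
  have hst := Ek_stab F C hEq
  have h1 := hst (F.args.card + 1 - m)
  have h2 := hst (F.args.card + 2 - m)
  rw [show m + 1 + (F.args.card + 1 - m) = F.args.card + 2 from by omega] at h1
  rw [show m + 1 + (F.args.card + 2 - m) = F.args.card + 3 from by omega] at h2
  unfold Estar
  rw [h1, h2]

lemma Estar_def (F : PCAF) (C : Set ℕ) :
    ∀ x ∈ Estar F 3 C, (Red 3 F).defends (Estar F 3 C) x := by
  intro x hx
  have hx3 : x ∈ Ek F 3 C (F.args.card + 3) := by rw [Estar_eq]; exact hx
  exact hx3.2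

lemma forward (F : PCAF) (C : Set ℕ) {S : Set ℕ}
    (hS : (Red 3 F).com S) (hC : F.claim '' S = C) :
    F.claim '' Estar F 3 C = C ∧ (Red 3 F).com (Estar F 3 C) := by
  have hargs : S ⊆ ↑F.args := hS.1.1.1
  have hS0 : S ⊆ E0 F C := fun a ha =>
    ⟨hargs ha, by rw [← hC]; exact ⟨a, ha, rfl⟩⟩
  have hS1 : S ⊆ E1 F C := by
    intro a ha
    refine ⟨hS0 ha, ?_⟩
    rintro ⟨b, hbE0, hba⟩
    obtain ⟨c, hcS, hca⟩ :=
      attack_transfer F hS.1 hbE0.1 (by rw [hC]; exact hbE0.2) hba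
    exact hS.1.1.2 c hcS a ha hca
  have hSk : ∀ k, S ⊆ Ek F 3 C (k + 1) := by
    intro k
    induction k with
    | zero => exact hS1
    | succ n ih =>
        intro a ha
        refine ⟨ih ha, ?_⟩
        intro b hb
        obtain ⟨c, hcS, hcb⟩ := hS.1.2 a ha b hb
        exact ⟨c, ih hcS, hcb⟩
  have hSstar : S ⊆ Estar F 3 C := hSk (F.args.card + 1)
  have hstarE0 : Estar F 3 C ⊆ E0 F C :=
    fun x hx => (Ek_sub_E1 F C (F.args.card + 1) hx).1
  have hclaim : F.claim '' Estar F 3 C = C := by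
    apply Set.Subset.antisymm
    · rintro _ ⟨x, hx, rfl⟩
      exact (hstarE0 hx).2
    · intro y hy
      rw [← hC] at hy
      obtain ⟨x, hx, rfl⟩ := hy
      exact ⟨x, hSstar hx, rfl⟩
  have hcf : (Red 3 F).cf (Estar F 3 C) := by
    refine ⟨fun x hx => (hstarE0 hx).1, ?_⟩
    intro a ha b hb hab
    exact (Ek_sub_E1 F C (F.args.card + 1) hb).2 ⟨a, hstarE0 ha, red3_sub F hab⟩
  refine ⟨hclaim, ⟨hcf, Estar_def F C⟩, ?_⟩
  intro a haA hdef
  have hdefS : (Red 3 F).defends S a := by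
    intro b hb
    obtain ⟨c, hcE, hcb⟩ := hdef b hb
    exact attack_transfer F hS.1 (hstarE0 hcE).1
      (by rw [hC]; exact (hstarE0 hcE).2) (red3_sub F hcb)
  exact hSstar (hS.2 a haA hdefS)

end Stmt18Aux


/-- `C ∈ com_p^3(F)` iff `claim(E_*^3(C)) = C` and `E_*^3(C)` is a complete
extension of `Red_3(F)`.  In particular, if `claim(E_*^3(C)) = C` but `E_*^3(C)`
is not complete in `Red_3(F)`, then no complete extension `S` of `Red_3(F)`
satisfies `claim(S) = C`. -/
theorem stmt_18 (F : PCAF) (C : Set ℕ) :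
    (C ∈ prefSem CAF.com 3 F ↔
      (F.claim '' Estar F 3 C = C ∧ (Red 3 F).com (Estar F 3 C))) ∧
    ((F.claim '' Estar F 3 C = C ∧ ¬ (Red 3 F).com (Estar F 3 C)) →
      ∀ S : Set ℕ, (Red 3 F).com S → F.claim '' S ≠ C) := by
  constructor
  · constructor
    · rintro ⟨S, hS, hC⟩
      exact Stmt18Aux.forward F C hS hC
    · rintro ⟨h1, h2⟩
      exact ⟨Estar F 3 C, h2, h1⟩
  · rintro ⟨h1, h2⟩ S hS hC
    exact h2 (Stmt18Aux.forward F C hS hC).2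
end

section
/- Let F be a PCAF, C a set of claims, and i ∈ {2,3,4}. Then C ∈ stg_p^i(F) if and only if claim(E_1^i(C)) = C and E_1^i(C) is a stage extension of Red_i(F). In particular, if claim(E_1^i(C)) = C but E_1^i(C) is not a stage extension of Red_i(F), then no stage extension S of Red_i(F) satisfies claim(S) = C. -/
lemma redAtt_mem' (i : ℕ) (hi : i ∈ ({2, 3, 4} : Set ℕ)) (F : PCAF) {p : ℕ × ℕ}
    (hp : p ∈ redAtt i F) : p ∈ F.att ∨ (p.2, p.1) ∈ F.att := by
  rcases hi with rfl | rfl | rfl <;>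
    simp only [redAtt, if_neg, if_pos, Set.mem_setOf_eq] at hp <;> norm_num at hp <;> tauto

lemma noAtt' (i : ℕ) (hi : i ∈ ({2, 3, 4} : Set ℕ)) (F : PCAF) {S : Set ℕ}
    (hcf : (Red i F).cf S) {a b : ℕ} (ha : a ∈ F.args) (hc : F.claim a ∈ F.claim '' S)
    (hb : b ∈ S) : (a, b) ∉ F.att := by
  intro hab
  obtain ⟨a', ha'S, ha'c⟩ := hc
  have ha'A : a' ∈ F.args := hcf.1 ha'S
  have hR : (a', b) ∈ F.att := (F.isWf a ha a' ha'A ha'c.symm b).mp hab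
  have h1 : (a', b) ∉ (Red i F).att := hcf.2 a' ha'S b hb
  have h2 : (b, a') ∉ (Red i F).att := hcf.2 b hb a' ha'S
  have hA : F.pref b a' → ¬ F.pref a' b := F.pref_asymm b a'
  rcases hi with rfl | rfl | rfl <;>
    simp only [Red, redAtt, Set.mem_setOf_eq] at h1 h2 <;> norm_num at h1 h2 <;> tauto

lemma E1_cf' (i : ℕ) (hi : i ∈ ({2, 3, 4} : Set ℕ)) (F : PCAF) (C : Set ℕ) :
    (Red i F).cf (E1 F C) := by
  constructor
  · intro x hx
    exact Finset.mem_coe.mpr hx.1.1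
  · intro a ha b hb hab
    rcases redAtt_mem' i hi F hab with h | h
    · exact hb.2 ⟨a, ha.1, h⟩
    · exact ha.2 ⟨b, hb.1, h⟩

lemma range_mono' (G : CAF) {S T : Set ℕ} (h : S ⊆ T) : G.range S ⊆ G.range T := by
  intro x hx
  rcases hx with hx | ⟨a, ha, hax⟩
  · exact Or.inl (h hx)
  · exact Or.inr ⟨a, h ha, hax⟩

lemma sub_E1' (i : ℕ) (hi : i ∈ ({2, 3, 4} : Set ℕ)) (F : PCAF) {S : Set ℕ}
    (hcf : (Red i F).cf S) : S ⊆ E1 F (F.claim '' S) := by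
  intro b hb
  have hbA : b ∈ F.args := hcf.1 hb
  refine ⟨⟨hbA, ⟨b, hb, rfl⟩⟩, ?_⟩
  rintro ⟨a, ⟨haA, hac⟩, hab⟩
  exact noAtt' i hi F hcf haA hac hb hab

/-- For `i ∈ {2,3,4}`: `C ∈ stg_p^i(F)` iff `claim(E_1^i(C)) = C` and `E_1^i(C)`
is a stage extension of `Red_i(F)`.  In particular, if `claim(E_1^i(C)) = C` but
`E_1^i(C)` is not a stage extension of `Red_i(F)`, then no stage extension `S` of
`Red_i(F)` satisfies `claim(S) = C`. -/
theorem stmt_19 (F : PCAF) (C : Set ℕ) :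
    ∀ i ∈ ({2, 3, 4} : Set ℕ),
      (C ∈ prefSem CAF.stg i F ↔
        (F.claim '' E1 F C = C ∧ (Red i F).stg (E1 F C))) ∧
      ((F.claim '' E1 F C = C ∧ ¬ (Red i F).stg (E1 F C)) →
        ∀ S : Set ℕ, (Red i F).stg S → F.claim '' S ≠ C) := by
  intro i hi
  have key : ∀ S : Set ℕ, (Red i F).stg S → F.claim '' S = C →
      F.claim '' E1 F C = C ∧ (Red i F).stg (E1 F C) := by
    intro S hS hSc
    subst hSc
    have hcf := hS.1
    have hsub : S ⊆ E1 F (F.claim '' S) := sub_E1' i hi F hcf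
    have hE1cf := E1_cf' i hi F (F.claim '' S)
    have hclaim : F.claim '' E1 F (F.claim '' S) = F.claim '' S := by
      apply Set.Subset.antisymm
      · rintro c ⟨a, ha, rfl⟩
        exact ha.1.2
      · exact Set.image_mono hsub
    have hr : (Red i F).range S ⊆ (Red i F).range (E1 F (F.claim '' S)) :=
      range_mono' _ hsub
    have heq : (Red i F).range S = (Red i F).range (E1 F (F.claim '' S)) := by
      by_contra hne
      exact hS.2 ⟨_, hE1cf, hr.ssubset_of_ne hne⟩
    refine ⟨hclaim, hE1cf, ?_⟩
    rintro ⟨T, hT, hlt⟩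
    exact hS.2 ⟨T, hT, heq ▸ hlt⟩
  constructor
  · constructor
    · rintro ⟨S, hS, hSc⟩
      exact key S hS hSc
    · rintro ⟨h1, h2⟩
      exact ⟨E1 F C, h2, h1⟩
  · rintro ⟨h1, h2⟩ S hS hSc
    exact h2 (key S hS hSc).2
end
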